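/- Let n \ge 6. Consider real parameters t_1 < t_2 < \cdots < t_n with the fixed values t_2 = 2, t_3 = 3, t_4 = 4, t_5 = 5, and set c_i = \prod_{j \ne i} 1/(t_j - t_i). Then: (a) there exists a choice of the remaining parameters t_1, t_6, \ldots, t_n with c_3 + c_4 < 0; (b) there exists a choice with c_3 + c_4 > 0; and (c) there exists a choice with c_3 + c_4 = 0. (The equation c_3 + c_4 = 0, i.e. |c_3| = |c_4|, is exactly the condition for the subdivision \{\{2,3,4,5\}, \{1,2,5,6,\ldots,n\}\} of C(n,2) to be \pi-coherent for \pi : C(n,n-2) \to C(n,2), so its \pi-coherence depends on the choice of points on the moment curve.) -/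

import Mathlib

open Finset

/-- The coefficient `c i = ∏_{j ≠ i, 1 ≤ j ≤ n} 1 / (t j - t i)` of the unique affine
dependence among the `n` points with parameters `t 1, …, t n` on the moment curve
in `ℝ^(n-2)`. -/
noncomputable def momentCoeff (n : ℕ) (t : ℕ → ℝ) (i : ℕ) : ℝ :=
  ∏ j ∈ (Finset.Icc 1 n).erase i, (t j - t i)⁻¹

/-- An admissible choice of parameters: `t 1 < t 2 < ⋯ < t n` with the fixed values
`t 2 = 2`, `t 3 = 3`, `t 4 = 4`, `t 5 = 5`. -/
def AdmissibleParams (n : ℕ) (t : ℕ → ℝ) : Prop :=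
  StrictMonoOn t (Set.Icc 1 n) ∧ t 2 = 2 ∧ t 3 = 3 ∧ t 4 = 4 ∧ t 5 = 5

/-- The family of parameters used in all three cases: `t 1 = a`, `t j = j` for
`2 ≤ j ≤ 5`, and `t j = 2n + j - 12` for `j ≥ 6`. -/
noncomputable def tt (n : ℕ) (a : ℝ) : ℕ → ℝ :=
  fun j => if j ≤ 1 then a else if j ≤ 5 then (j : ℝ) else 2 * n + j - 12

lemma tt_admissible (n : ℕ) (hn : 6 ≤ n) (a : ℝ) (ha : a < 2) :
    AdmissibleParams n (tt n a) := by
  refine ⟨?_, by norm_num [tt], by norm_num [tt], by norm_num [tt], by norm_num [tt]⟩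
  intro i hi j hj hij
  obtain ⟨hi1, hi2⟩ := hi
  obtain ⟨hj1, hj2⟩ := hj
  have hnR : (6:ℝ) ≤ (n:ℝ) := by exact_mod_cast hn
  have hijR : (i:ℝ) < (j:ℝ) := by exact_mod_cast hij
  simp only [tt]
  split_ifs with h1 h2 h3 h4 h5 h6 <;> try (exfalso; omega)
  all_goals
    (have hj0 : (0:ℝ) ≤ (j:ℝ) := Nat.cast_nonneg j
     try have e2 : (2:ℝ) ≤ (j:ℝ) := by exact_mod_cast (show 2 ≤ j by omega)
     try have e5 : (i:ℝ) ≤ 5 := by exact_mod_cast (show i ≤ 5 by omega)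
     linarith)

lemma prod_shift (c : ℝ) (m : ℕ) :
    (∏ k ∈ Finset.range (m+1), (c + 1 + (k:ℝ))) * c
      = (∏ k ∈ Finset.range (m+1), (c + (k:ℝ))) * (c + (m+1)) := by
  rw [Finset.prod_range_succ, Finset.prod_range_succ']
  have h : ∀ k ∈ Finset.range m, (c + ((k:ℕ)+1:ℕ) : ℝ) = c + 1 + (k:ℝ) := by
    intro k _; push_cast; ring
  rw [Finset.prod_congr rfl h]
  push_cast; ring

lemma mc3 (n : ℕ) (hn : 6 ≤ n) (a : ℝ) :
    momentCoeff n (tt n a) 3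
      = ((a - 3) * (-2))⁻¹ * (∏ k ∈ Finset.range (n-5), (2*(n:ℝ) - 9 + (k:ℝ)))⁻¹ := by
  have hset : (Finset.Icc 1 n).erase 3 = ({1,2,4,5} : Finset ℕ) ∪ Finset.Icc 6 n := by
    ext j
    simp only [Finset.mem_erase, Finset.mem_Icc, Finset.mem_union, Finset.mem_insert,
      Finset.mem_singleton]
    omega
  have hdisj : Disjoint ({1,2,4,5} : Finset ℕ) (Finset.Icc 6 n) := by
    simp only [Finset.disjoint_left, Finset.mem_insert, Finset.mem_singleton, Finset.mem_Icc]
    omega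
  rw [momentCoeff, hset, Finset.prod_union hdisj]
  have h1 : ∏ j ∈ ({1,2,4,5} : Finset ℕ), (tt n a j - tt n a 3)⁻¹ = ((a - 3) * (-2))⁻¹ := by
    norm_num [tt]
  have h2 : ∏ j ∈ Finset.Icc 6 n, (tt n a j - tt n a 3)⁻¹
      = (∏ k ∈ Finset.range (n-5), (2*(n:ℝ) - 9 + (k:ℝ)))⁻¹ := by
    rw [← Finset.prod_inv_distrib, ← Finset.Ico_add_one_right_eq_Icc, Finset.prod_Ico_eq_prod_range]
    have hm : n + 1 - 6 = n - 5 := by omega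
    rw [hm]
    refine Finset.prod_congr rfl fun k _ => ?_
    have : tt n a (6 + k) = 2*(n:ℝ) + (6 + k : ℕ) - 12 := by
      simp only [tt]; rw [if_neg (by omega), if_neg (by omega)]
    rw [this]
    norm_num [tt]
    ring_nf
  rw [h1, h2]

lemma mc4 (n : ℕ) (hn : 6 ≤ n) (a : ℝ) :
    momentCoeff n (tt n a) 4
      = ((a - 4) * 2)⁻¹ * (∏ k ∈ Finset.range (n-5), (2*(n:ℝ) - 10 + (k:ℝ)))⁻¹ := by
  have hset : (Finset.Icc 1 n).erase 4 = ({1,2,3,5} : Finset ℕ) ∪ Finset.Icc 6 n := by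
    ext j
    simp only [Finset.mem_erase, Finset.mem_Icc, Finset.mem_union, Finset.mem_insert,
      Finset.mem_singleton]
    omega
  have hdisj : Disjoint ({1,2,3,5} : Finset ℕ) (Finset.Icc 6 n) := by
    simp only [Finset.disjoint_left, Finset.mem_insert, Finset.mem_singleton, Finset.mem_Icc]
    omega
  rw [momentCoeff, hset, Finset.prod_union hdisj]
  have h1 : ∏ j ∈ ({1,2,3,5} : Finset ℕ), (tt n a j - tt n a 4)⁻¹ = ((a - 4) * 2)⁻¹ := by
    norm_num [tt]
  have h2 : ∏ j ∈ Finset.Icc 6 n, (tt n a j - tt n a 4)⁻¹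
      = (∏ k ∈ Finset.range (n-5), (2*(n:ℝ) - 10 + (k:ℝ)))⁻¹ := by
    rw [← Finset.prod_inv_distrib, ← Finset.Ico_add_one_right_eq_Icc, Finset.prod_Ico_eq_prod_range]
    have hm : n + 1 - 6 = n - 5 := by omega
    rw [hm]
    refine Finset.prod_congr rfl fun k _ => ?_
    have : tt n a (6 + k) = 2*(n:ℝ) + (6 + k : ℕ) - 12 := by
      simp only [tt]; rw [if_neg (by omega), if_neg (by omega)]
    rw [this]
    norm_num [tt]
    ring_nf
  rw [h1, h2]

lemma q4_pos (n : ℕ) (hn : 6 ≤ n) :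
    0 < ∏ k ∈ Finset.range (n-5), (2*(n:ℝ) - 10 + (k:ℝ)) := by
  refine Finset.prod_pos fun k _ => ?_
  have hnR : (6:ℝ) ≤ (n:ℝ) := by exact_mod_cast hn
  have : (0:ℝ) ≤ (k:ℝ) := Nat.cast_nonneg k
  linarith

lemma q_rel (n : ℕ) (hn : 6 ≤ n) :
    2 * ∏ k ∈ Finset.range (n-5), (2*(n:ℝ) - 9 + (k:ℝ))
      = 3 * ∏ k ∈ Finset.range (n-5), (2*(n:ℝ) - 10 + (k:ℝ)) := by
  have h := prod_shift (2*(n:ℝ) - 10) (n-6)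
  have hm : n - 6 + 1 = n - 5 := by omega
  rw [hm] at h
  have e1 : ∀ k ∈ Finset.range (n-5), (2*(n:ℝ) - 10 + 1 + (k:ℝ)) = 2*(n:ℝ) - 9 + (k:ℝ) := by
    intro k _; ring
  rw [Finset.prod_congr rfl e1] at h
  have hnR : (6:ℝ) ≤ (n:ℝ) := by exact_mod_cast hn
  have hcast : ((n - 6 : ℕ) : ℝ) = (n:ℝ) - 6 := by
    rw [Nat.cast_sub hn]; norm_num
  rw [hcast] at h
  have hc : (0:ℝ) < 2*(n:ℝ) - 10 := by linarith
  have key : (2 * ∏ k ∈ Finset.range (n-5), (2*(n:ℝ) - 9 + (k:ℝ))) * (2*(n:ℝ) - 10)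
      = (3 * ∏ k ∈ Finset.range (n-5), (2*(n:ℝ) - 10 + (k:ℝ))) * (2*(n:ℝ) - 10) := by
    nlinarith [h]
  exact mul_right_cancel₀ (ne_of_gt hc) key

lemma endgame (a A B : ℝ) (hB : 0 < B) (h : 2*A = 3*B) (ha3 : a < 3) :
    ((a - 3) * (-2))⁻¹ * A⁻¹ + ((a - 4) * 2)⁻¹ * B⁻¹
      = (a - 1) / (6 * (3 - a) * (4 - a) * B) := by
  have hA : A = 3/2 * B := by linarith
  subst hA
  have h3 : a - 3 ≠ 0 := by intro hh; rw [sub_eq_zero] at hh; linarith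
  have h4 : a - 4 ≠ 0 := by intro hh; rw [sub_eq_zero] at hh; linarith
  have h3' : (3:ℝ) - a ≠ 0 := by intro hh; rw [sub_eq_zero] at hh; linarith
  have h4' : (4:ℝ) - a ≠ 0 := by intro hh; rw [sub_eq_zero] at hh; linarith
  have hB' : B ≠ 0 := ne_of_gt hB
  have hden : 6 * (3 - a) * (4 - a) * B ≠ 0 :=
    mul_ne_zero (mul_ne_zero (mul_ne_zero (by norm_num) h3') h4') hB'
  rw [eq_div_iff hden]
  field_simp
  ring

/-- For `n ≥ 6` there are admissible choices of parameters `t 1 < ⋯ < t n`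
(with `t 2 = 2, t 3 = 3, t 4 = 4, t 5 = 5`) making `c 3 + c 4` negative, positive,
or zero respectively.  The equation `c 3 + c 4 = 0` is exactly the condition for the
subdivision `{{2,3,4,5}, {1,2,5,6,…,n}}` of `C(n,2)` to be `π`-coherent for
`π : C(n,n-2) → C(n,2)`, so its `π`-coherence depends on the choice of points. -/
theorem exists_params_c3_add_c4_neg_pos_zero (n : ℕ) (hn : 6 ≤ n) :
    (∃ t : ℕ → ℝ, AdmissibleParams n t ∧
      momentCoeff n t 3 + momentCoeff n t 4 < 0) ∧
    (∃ t : ℕ → ℝ, AdmissibleParams n t ∧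
      momentCoeff n t 3 + momentCoeff n t 4 > 0) ∧
    (∃ t : ℕ → ℝ, AdmissibleParams n t ∧
      momentCoeff n t 3 + momentCoeff n t 4 = 0) := by
  have hB := q4_pos n hn
  have hrel := q_rel n hn
  refine ⟨⟨tt n 0, tt_admissible n hn 0 (by norm_num), ?_⟩,
    ⟨tt n (3/2), tt_admissible n hn (3/2) (by norm_num), ?_⟩,
    ⟨tt n 1, tt_admissible n hn 1 (by norm_num), ?_⟩⟩
  · rw [mc3 n hn 0, mc4 n hn 0, endgame _ _ _ hB hrel (by norm_num)]
    apply div_neg_of_neg_of_pos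
    · norm_num
    · norm_num
      linarith
  · rw [mc3 n hn (3/2), mc4 n hn (3/2), endgame _ _ _ hB hrel (by norm_num)]
    apply div_pos
    · norm_num
    · norm_num
      linarith
  · rw [mc3 n hn 1, mc4 n hn 1, endgame _ _ _ hB hrel (by norm_num)]
    norm_num
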